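/- The function q(t) defined for t > 0 by q(t) = (1/(at²))(1 - e^{-at} - a t e^{-at}) + ((λ - t)/(a(λ+t)³))(1 - e^{-a(λ+t)}) + (t/(λ+t)²) e^{-a(λ+t)}, and q(t) = 0 for t ≤ 0, is nonnegative and integrates to 1; that is, it is a probability density function (the Exp-Max-U-Exp(a, λ) density). -/

import Mathlib

open MeasureTheory Set

/-- The Exp-Max-U-Exp(a, λ) probability density function. -/
noncomputable def expMaxUExpPDF (a lam t : ℝ) : ℝ :=
  if t ≤ 0 then 0
  else (1 / (a * t ^ 2)) * (1 - Real.exp (-a * t) - a * t * Real.exp (-a * t))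
    + ((lam - t) / (a * (lam + t) ^ 3)) * (1 - Real.exp (-a * (lam + t)))
    + (t / (lam + t) ^ 2) * Real.exp (-a * (lam + t))

/-- `∫_0^b e^{-cs} ds = (1 - e^{-cb})/c`. -/
lemma int_exp_aux (c b : ℝ) (hc : c ≠ 0) :
    ∫ s in (0:ℝ)..b, Real.exp (-(c*s)) = (1 - Real.exp (-(c*b)))/c := by
  have hderiv : ∀ s ∈ Set.uIcc (0:ℝ) b,
      HasDerivAt (fun s : ℝ => -Real.exp (-(c*s))/c) (Real.exp (-(c*s))) s := by
    intro s _
    have h1 : HasDerivAt (fun s : ℝ => -(c*s)) (-c) s := by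
      simpa using ((hasDerivAt_id s).const_mul c).fun_neg
    have h2 : HasDerivAt (fun s : ℝ => Real.exp (-(c*s))) (Real.exp (-(c*s)) * (-c)) s :=
      h1.exp
    have h3 := h2.neg.div_const c
    refine h3.congr_deriv ?_
    field_simp
  have hint : IntervalIntegrable (fun s : ℝ => Real.exp (-(c*s))) MeasureTheory.volume 0 b :=
    (Continuous.intervalIntegrable (by fun_prop) _ _)
  have := intervalIntegral.integral_eq_sub_of_hasDerivAt hderiv hint
  rw [this]
  simp [Real.exp_zero]
  field_simp
  ring

/-- `∫_0^b s e^{-cs} ds = (1 - e^{-cb} - cb e^{-cb})/c²`. -/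
lemma int_s_exp_aux (c b : ℝ) (hc : c ≠ 0) :
    ∫ s in (0:ℝ)..b, s * Real.exp (-(c*s))
      = (1 - Real.exp (-(c*b)) - c*b*Real.exp (-(c*b)))/c^2 := by
  have hderiv : ∀ s ∈ Set.uIcc (0:ℝ) b,
      HasDerivAt (fun s : ℝ => -((s/c + 1/c^2) * Real.exp (-(c*s))))
        (s * Real.exp (-(c*s))) s := by
    intro s _
    have h1 : HasDerivAt (fun s : ℝ => -(c*s)) (-c) s := by
      simpa using ((hasDerivAt_id s).const_mul c).fun_neg
    have h2 : HasDerivAt (fun s : ℝ => Real.exp (-(c*s))) (Real.exp (-(c*s)) * (-c)) s :=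
      h1.exp
    have h3 : HasDerivAt (fun s : ℝ => s/c + 1/c^2) (1/c) s := by
      have h : HasDerivAt (fun y : ℝ => y/c) (1/c) s := by
        simpa using (hasDerivAt_id s).div_const c
      exact h.add_const _
    have h4 := (h3.mul h2).neg
    refine h4.congr_deriv ?_
    field_simp
    ring
  have hint : IntervalIntegrable (fun s : ℝ => s * Real.exp (-(c*s))) MeasureTheory.volume 0 b :=
    (Continuous.intervalIntegrable (by fun_prop) _ _)
  have := intervalIntegral.integral_eq_sub_of_hasDerivAt hderiv hint
  rw [this]
  simp [Real.exp_zero]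
  field_simp
  ring

lemma q_nonneg (a lam : ℝ) (ha : 0 < a) (hlam : 0 < lam) (t : ℝ) (ht : 0 < t) :
    0 ≤ expMaxUExpPDF a lam t := by
  have hc2 : (0:ℝ) < lam + t := by linarith
  have key : a * expMaxUExpPDF a lam t
      = ∫ s in (0:ℝ)..a, (s * Real.exp (-(t*s))
          + (lam/(lam+t)^2) * Real.exp (-((lam+t)*s))
          - (t/(lam+t)) * (s * Real.exp (-((lam+t)*s)))) := by
    rw [intervalIntegral.integral_sub, intervalIntegral.integral_add,
      intervalIntegral.integral_const_mul, intervalIntegral.integral_const_mul,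
      int_s_exp_aux t a ht.ne', int_exp_aux (lam+t) a hc2.ne',
      int_s_exp_aux (lam+t) a hc2.ne']
    · unfold expMaxUExpPDF
      rw [if_neg (not_le.2 ht)]
      have e1 : Real.exp (-(t*a)) = Real.exp (-a*t) := by ring_nf
      have e2 : Real.exp (-((lam+t)*a)) = Real.exp (-a*(lam+t)) := by ring_nf
      rw [e1, e2]
      field_simp
      ring
    · exact Continuous.intervalIntegrable (by fun_prop) _ _
    · exact Continuous.intervalIntegrable (by fun_prop) _ _
    · exact Continuous.intervalIntegrable (by fun_prop) _ _
    · exact Continuous.intervalIntegrable (by fun_prop) _ _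
  have hnn : 0 ≤ a * expMaxUExpPDF a lam t := by
    rw [key]
    apply intervalIntegral.integral_nonneg ha.le
    intro s hs
    have hs0 : 0 ≤ s := hs.1
    have he : Real.exp (-((lam+t)*s)) ≤ Real.exp (-(t*s)) := by
      apply Real.exp_le_exp.2
      nlinarith
    have h1 : t/(lam+t) ≤ 1 := by
      rw [div_le_one hc2]; linarith
    have h2 : (t/(lam+t)) * (s * Real.exp (-((lam+t)*s))) ≤ s * Real.exp (-(t*s)) :=
      calc (t/(lam+t)) * (s * Real.exp (-((lam+t)*s)))
          ≤ 1 * (s * Real.exp (-((lam+t)*s))) := by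
            apply mul_le_mul_of_nonneg_right h1; positivity
        _ = s * Real.exp (-((lam+t)*s)) := one_mul _
        _ ≤ s * Real.exp (-(t*s)) := mul_le_mul_of_nonneg_left he hs0
    have h3 : 0 ≤ (lam/(lam+t)^2) * Real.exp (-((lam+t)*s)) := by positivity
    linarith
  nlinarith

theorem expMaxUExpPDF_is_pdf (a lam : ℝ) (ha : 0 < a) (hlam : 0 < lam) :
    (∀ t : ℝ, 0 ≤ expMaxUExpPDF a lam t) ∧ (∫ t : ℝ, expMaxUExpPDF a lam t) = 1 := by
  have hnonneg : ∀ t : ℝ, 0 ≤ expMaxUExpPDF a lam t := by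
    intro t
    by_cases ht : t ≤ 0
    · unfold expMaxUExpPDF; rw [if_pos ht]
    · exact q_nonneg a lam ha hlam t (not_le.1 ht)
  refine ⟨hnonneg, ?_⟩
  set G : ℝ → ℝ := fun t =>
    1 - (1 - Real.exp (-a*t))/(a*t) + t*(1 - Real.exp (-a*(lam+t)))/(a*(lam+t)^2) with hG
  set F : ℝ → ℝ := fun t => if t ≤ 0 then 0 else G t with hF
  -- derivative of the exponential pieces
  have hexp1 : ∀ x : ℝ, HasDerivAt (fun y : ℝ => Real.exp (-a*y)) (-a * Real.exp (-a*x)) x := by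
    intro x
    have h1 : HasDerivAt (fun y : ℝ => -a*y) (-a) x := by
      simpa using (hasDerivAt_id x).const_mul (-a)
    simpa [mul_comm] using h1.exp
  have hexp2 : ∀ x : ℝ, HasDerivAt (fun y : ℝ => Real.exp (-a*(lam+y)))
      (-a * Real.exp (-a*(lam+x))) x := by
    intro x
    have h1 : HasDerivAt (fun y : ℝ => -a*(lam+y)) (-a) x := by
      simpa using ((hasDerivAt_const x lam).add (hasDerivAt_id x)).const_mul (-a)
    simpa [mul_comm] using h1.exp
  -- derivative of F on Ioi 0
  have hderiv : ∀ t ∈ Ioi (0:ℝ), HasDerivAt F (expMaxUExpPDF a lam t) t := by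
    intro t ht
    have ht0 : (0:ℝ) < t := ht
    have hc2 : (0:ℝ) < lam + t := by linarith
    have hFG : F =ᶠ[nhds t] G := by
      filter_upwards [eventually_gt_nhds ht0] with x hx
      simp only [hF, if_neg (not_le.2 hx)]
    have hd1 : HasDerivAt (fun x : ℝ => (1 - Real.exp (-a*x))/(a*x))
        (((a * Real.exp (-a*t)) * (a*t) - (1 - Real.exp (-a*t)) * a)/(a*t)^2) t := by
      have hnum : HasDerivAt (fun x : ℝ => 1 - Real.exp (-a*x)) (a * Real.exp (-a*t)) t := by
        simpa using ((hexp1 t).const_sub 1)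
      have hden : HasDerivAt (fun x : ℝ => a*x) a t := by
        simpa using (hasDerivAt_id t).const_mul a
      exact hnum.div hden (by positivity)
    have hd2 : HasDerivAt (fun x : ℝ => x*(1 - Real.exp (-a*(lam+x)))/(a*(lam+x)^2))
        (((1*(1 - Real.exp (-a*(lam+t))) + t*(a * Real.exp (-a*(lam+t)))) * (a*(lam+t)^2)
          - t*(1 - Real.exp (-a*(lam+t))) * (a*(2*(lam+t))))/(a*(lam+t)^2)^2) t := by
      have hnum : HasDerivAt (fun x : ℝ => x*(1 - Real.exp (-a*(lam+x))))
          (1*(1 - Real.exp (-a*(lam+t))) + t*(a * Real.exp (-a*(lam+t)))) t := by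
        have h2 : HasDerivAt (fun x : ℝ => 1 - Real.exp (-a*(lam+x)))
            (a * Real.exp (-a*(lam+t))) t := by
          simpa using ((hexp2 t).const_sub 1)
        exact (hasDerivAt_id t).mul h2
      have hden : HasDerivAt (fun x : ℝ => a*(lam+x)^2) (a*(2*(lam+t))) t := by
        have hb : HasDerivAt (fun x : ℝ => (lam+x)^2) (2*(lam+t)) t := by
          have : HasDerivAt (fun x : ℝ => lam+x) 1 t := by
            simpa using (hasDerivAt_const t lam).fun_add (hasDerivAt_id t)
          simpa using this.fun_pow 2
        simpa [mul_assoc] using hb.const_mul a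
      exact hnum.div hden (by positivity)
    have hGd : HasDerivAt G (expMaxUExpPDF a lam t) t := by
      have h := (hd1.const_sub 1).add hd2
      refine h.congr_deriv ?_
      unfold expMaxUExpPDF
      rw [if_neg (not_le.2 ht0)]
      field_simp
      ring
    exact hGd.congr_of_eventuallyEq hFG
  -- continuity of F at 0 from the right
  have hcont : ContinuousWithinAt F (Ici (0:ℝ)) 0 := by
    rw [← continuousWithinAt_Ioi_iff_Ici]
    have hF0 : F 0 = 0 := by simp [hF]
    unfold ContinuousWithinAt
    rw [hF0]
    have hFG : F =ᶠ[nhdsWithin 0 (Ioi 0)] G := by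
      filter_upwards [self_mem_nhdsWithin] with x hx
      simp only [hF, if_neg (not_le.2 (mem_Ioi.1 hx))]
    rw [Filter.tendsto_congr' hFG]
    -- first piece tends to 1
    have h1 : Filter.Tendsto (fun t : ℝ => (1 - Real.exp (-a*t))/(a*t))
        (nhdsWithin 0 (Ioi 0)) (nhds 1) := by
      have hd : HasDerivAt (fun t : ℝ => 1 - Real.exp (-a*t)) a 0 := by
        simpa using ((hexp1 0).const_sub 1)
      rw [hasDerivAt_iff_tendsto_slope] at hd
      have hd' : Filter.Tendsto (slope (fun t : ℝ => 1 - Real.exp (-a*t)) 0)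
          (nhdsWithin 0 (Ioi 0)) (nhds a) :=
        hd.mono_left (nhdsWithin_mono 0 (fun x hx => ne_of_gt hx))
      have h := hd'.div_const a
      have heq : (fun t : ℝ => slope (fun t : ℝ => 1 - Real.exp (-a*t)) 0 t / a)
          =ᶠ[nhdsWithin 0 (Ioi 0)] (fun t : ℝ => (1 - Real.exp (-a*t))/(a*t)) := by
        filter_upwards [self_mem_nhdsWithin] with x hx
        have hx0 : x ≠ 0 := ne_of_gt (mem_Ioi.1 hx)
        have hs : slope (fun t : ℝ => 1 - Real.exp (-a*t)) 0 x = (1 - Real.exp (-a*x))/x := by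
          rw [slope_def_field]; norm_num
        rw [hs, div_div, mul_comm x a]
      have := Filter.Tendsto.congr' heq h
      simpa [div_self ha.ne'] using this
    have h2 : Filter.Tendsto (fun t : ℝ => t*(1 - Real.exp (-a*(lam+t)))/(a*(lam+t)^2))
        (nhdsWithin 0 (Ioi 0)) (nhds 0) := by
      have hca : ContinuousAt (fun t : ℝ => t*(1 - Real.exp (-a*(lam+t)))/(a*(lam+t)^2)) 0 := by
        apply ContinuousAt.div
        · fun_prop
        · fun_prop
        · have : a*(lam+(0:ℝ))^2 ≠ 0 := by positivity
          simpa using this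
      have h2t : Filter.Tendsto (fun t : ℝ => t*(1 - Real.exp (-a*(lam+t)))/(a*(lam+t)^2))
          (nhdsWithin 0 (Ioi 0)) (nhds ((0:ℝ)*(1 - Real.exp (-a*(lam+0)))/(a*(lam+0)^2))) :=
        hca.tendsto.mono_left nhdsWithin_le_nhds
      simpa using h2t
    have hc1 : Filter.Tendsto (fun _ : ℝ => (1:ℝ)) (nhdsWithin 0 (Ioi 0)) (nhds 1) :=
      tendsto_const_nhds
    have hfin := (hc1.sub h1).add h2
    rw [hG]
    simpa using hfin
  -- limit of F at infinity
  have htop : Filter.Tendsto F Filter.atTop (nhds 1) := by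
    have hFG : F =ᶠ[Filter.atTop] G := by
      filter_upwards [Filter.eventually_gt_atTop (0:ℝ)] with x hx
      simp only [hF, if_neg (not_le.2 hx)]
    rw [Filter.tendsto_congr' hFG]
    have hdenom : Filter.Tendsto (fun t : ℝ => a*t) Filter.atTop Filter.atTop :=
      Filter.Tendsto.const_mul_atTop ha Filter.tendsto_id
    have hA : Filter.Tendsto (fun t : ℝ => (1 - Real.exp (-a*t))/(a*t))
        Filter.atTop (nhds 0) := by
      have harg : Filter.Tendsto (fun t : ℝ => -a*t) Filter.atTop Filter.atBot := by
        have : Filter.Tendsto (fun t : ℝ => -(a*t)) Filter.atTop Filter.atBot :=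
          Filter.tendsto_neg_atBot_iff.2 hdenom
        simpa [neg_mul] using this
      have hexp0 : Filter.Tendsto (fun t : ℝ => Real.exp (-a*t)) Filter.atTop (nhds 0) :=
        Real.tendsto_exp_atBot.comp harg
      have hnum : Filter.Tendsto (fun t : ℝ => 1 - Real.exp (-a*t)) Filter.atTop (nhds 1) := by
        simpa using tendsto_const_nhds.sub hexp0
      exact hnum.div_atTop hdenom
    have hB : Filter.Tendsto (fun t : ℝ => t*(1 - Real.exp (-a*(lam+t)))/(a*(lam+t)^2))
        Filter.atTop (nhds 0) := by
      have hub : Filter.Tendsto (fun t : ℝ => 1/(a*t)) Filter.atTop (nhds 0) :=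
        Filter.Tendsto.div_atTop tendsto_const_nhds hdenom
      apply tendsto_of_tendsto_of_tendsto_of_le_of_le' tendsto_const_nhds hub
      · filter_upwards [Filter.eventually_gt_atTop (0:ℝ)] with t ht
        have he1 : Real.exp (-a*(lam+t)) ≤ 1 := by
          apply Real.exp_le_one_iff.2; nlinarith
        apply div_nonneg (mul_nonneg ht.le (by linarith)) (by positivity)
      · filter_upwards [Filter.eventually_gt_atTop (0:ℝ)] with t ht
        have he1 : Real.exp (-a*(lam+t)) ≤ 1 := by
          apply Real.exp_le_one_iff.2; nlinarith
        have he0 : 0 ≤ Real.exp (-a*(lam+t)) := Real.exp_nonneg _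
        rw [div_le_div_iff₀ (by positivity) (by positivity)]
        nlinarith [mul_nonneg (mul_nonneg ha.le (mul_nonneg ht.le ht.le)) he0,
          mul_nonneg ha.le (mul_nonneg hlam.le ht.le),
          mul_nonneg ha.le (mul_nonneg hlam.le hlam.le)]
    have hc1 : Filter.Tendsto (fun _ : ℝ => (1:ℝ)) Filter.atTop (nhds 1) := tendsto_const_nhds
    have hfin := (hc1.sub hA).add hB
    rw [hG]
    simpa using hfin
  -- put everything together
  have hIoi : ∫ t in Ioi (0:ℝ), expMaxUExpPDF a lam t = 1 - F 0 :=
    integral_Ioi_of_hasDerivAt_of_nonneg hcont hderiv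
      (fun x hx => q_nonneg a lam ha hlam x hx) htop
  have hF0 : F 0 = 0 := by simp [hF]
  have hall : ∫ t in Ioi (0:ℝ), expMaxUExpPDF a lam t = ∫ t : ℝ, expMaxUExpPDF a lam t := by
    apply setIntegral_eq_integral_of_forall_compl_eq_zero
    intro x hx
    have : x ≤ 0 := by simpa using hx
    unfold expMaxUExpPDF
    rw [if_pos this]
  rw [← hall, hIoi, hF0, sub_zero]
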